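/- Let F : ℝ^n × ℝ^m → ℝ^n satisfy the hypotheses of the adjoint method (F C², ∂F/∂u invertible along the solution path, u(m) C¹), and j : ℝ^n → ℝ C². Then the Hessian-vector product of the reduced functional ĵ(m) = j(u(m)) in direction δm equals the derivative in direction δm of the map m ↦ −(∂F/∂m(u(m),m))ᵀ λ(m), where λ(m) solves (∂F/∂u(u(m),m))ᵀ λ(m) = ∇j(u(m)); i.e., forward-over-reverse differentiation yields ∇²ĵ(m) δm. -/

import Mathlib

open Matrix

/-- Forward-over-reverse second derivatives: the Hessian-vector product of the reduced
functional `ĵ(m) = j(u(m))` in direction `δm` equals the directional derivative of the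
adjoint-based gradient map `m ↦ −(∂F/∂m(u(m),m))ᵀ λ(m)`, where `λ(m)` solves the adjoint
equation `(∂F/∂u(u(m),m))ᵀ λ(m) = ∇j(u(m))`. -/
theorem forward_over_reverse_hessian
    (n m : ℕ) (F : (Fin n → ℝ) × (Fin m → ℝ) → (Fin n → ℝ))
    (hF : ContDiff ℝ 2 F)
    (u : (Fin m → ℝ) → (Fin n → ℝ)) (hu : ContDiff ℝ 1 u)
    (hsol : ∀ p : Fin m → ℝ, F (u p, p) = 0)
    (hinv : ∀ p : Fin m → ℝ,
      Function.Bijective (fun v : Fin n → ℝ => fderiv ℝ F (u p, p) (v, 0)))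
    (j : (Fin n → ℝ) → ℝ) (hj : ContDiff ℝ 2 j)
    (lam : (Fin m → ℝ) → (Fin n → ℝ)) (hlam : Differentiable ℝ lam)
    (hadj : ∀ (p : Fin m → ℝ) (v : Fin n → ℝ),
      lam p ⬝ᵥ fderiv ℝ F (u p, p) (v, 0) = fderiv ℝ j (u p) v)
    (m0 δm : Fin m → ℝ) :
    ∀ a : Fin m,
      fderiv ℝ (fun p' => fderiv ℝ (fun p => j (u p)) p' (Pi.single a 1)) m0 δm =
        fderiv ℝ (fun p => fun b : Fin m =>
          -(lam p ⬝ᵥ fderiv ℝ F (u p, p) (0, Pi.single b 1))) m0 δm a := by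
  intro a
  have hud : Differentiable ℝ u := hu.differentiable one_ne_zero
  have hFd : Differentiable ℝ F := hF.differentiable two_ne_zero
  have hjd : Differentiable ℝ j := hj.differentiable two_ne_zero
  have hpair : Differentiable ℝ (fun q : Fin m → ℝ => (u q, q)) :=
    hud.prodMk differentiable_id
  -- derivative of the pair map
  have hpairD : ∀ p : Fin m → ℝ, fderiv ℝ (fun q : Fin m → ℝ => (u q, q)) p =
      (fderiv ℝ u p).prod (ContinuousLinearMap.id ℝ _) := by
    intro p
    rw [DifferentiableAt.fderiv_prodMk (hud p) differentiableAt_fun_id, fderiv_id']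
  -- key identity: gradient of reduced functional = adjoint form
  have key : ∀ (p w : Fin m → ℝ),
      fderiv ℝ (fun q => j (u q)) p w = -(lam p ⬝ᵥ fderiv ℝ F (u p, p) (0, w)) := by
    intro p w
    -- differentiate the constraint F (u p, p) = 0
    have hconst : (fun q : Fin m → ℝ => F (u q, q)) = fun _ => (0 : Fin n → ℝ) :=
      funext hsol
    have hzero : fderiv ℝ (fun q : Fin m → ℝ => F (u q, q)) p = 0 := by
      rw [hconst]; exact fderiv_const_apply 0
    have hchainF : fderiv ℝ (fun q : Fin m → ℝ => F (u q, q)) p =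
        (fderiv ℝ F (u p, p)).comp (fderiv ℝ (fun q : Fin m → ℝ => (u q, q)) p) :=
      fderiv_comp p (hFd _) (hpair p)
    have hFconstraint : fderiv ℝ F (u p, p) (fderiv ℝ u p w, w) = 0 := by
      have := congrArg (fun L : (Fin m → ℝ) →L[ℝ] (Fin n → ℝ) => L w)
        (hchainF.symm.trans hzero)
      simpa [hpairD p] using this
    have hsplit : fderiv ℝ F (u p, p) (fderiv ℝ u p w, 0)
        = -(fderiv ℝ F (u p, p) (0, w)) := by
      have hdecomp : ((fderiv ℝ u p w, w) : (Fin n → ℝ) × (Fin m → ℝ))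
          = (fderiv ℝ u p w, 0) + (0, w) := by simp [Prod.ext_iff]
      rw [hdecomp, map_add] at hFconstraint
      exact eq_neg_of_add_eq_zero_left hFconstraint
    have hchainj : fderiv ℝ (fun q => j (u q)) p w = fderiv ℝ j (u p) (fderiv ℝ u p w) := by
      have h := fderiv_comp p (hjd (u p)) (hud p)
      have : (fun q => j (u q)) = j ∘ u := rfl
      rw [this, h]; rfl
    rw [hchainj, ← hadj p (fderiv ℝ u p w), hsplit, dotProduct_neg]
  -- differentiability of the adjoint gradient components
  have hDF : Differentiable ℝ (fderiv ℝ F) :=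
    (hF.fderiv_right (m := 1) (le_refl 2)).differentiable one_ne_zero
  have hcomp : ∀ b : Fin m, Differentiable ℝ
      (fun p : Fin m → ℝ => -(lam p ⬝ᵥ fderiv ℝ F (u p, p) (0, Pi.single b 1))) := by
    intro b
    have hA : Differentiable ℝ
        (fun p : Fin m → ℝ => fderiv ℝ F (u p, p) (0, Pi.single b 1)) := by
      have h1 : Differentiable ℝ (fun p : Fin m → ℝ => fderiv ℝ F (u p, p)) :=
        hDF.comp hpair
      exact (ContinuousLinearMap.apply ℝ (Fin n → ℝ)
        ((0 : Fin n → ℝ), Pi.single b 1)).differentiable.comp h1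
    have hAi : ∀ i : Fin n, Differentiable ℝ
        (fun p : Fin m → ℝ => fderiv ℝ F (u p, p) (0, Pi.single b 1) i) := by
      intro i
      exact (ContinuousLinearMap.proj i).differentiable.comp hA
    refine Differentiable.neg ?_
    simp only [dotProduct]
    exact Differentiable.fun_sum fun i _ =>
      ((differentiable_pi.mp hlam i).mul (hAi i))
  have hfun : (fun p' => fderiv ℝ (fun p => j (u p)) p' (Pi.single a 1)) =
      fun p' => -(lam p' ⬝ᵥ fderiv ℝ F (u p', p') (0, Pi.single a 1)) :=
    funext fun p' => key p' _
  rw [hfun, fderiv_pi (fun b => (hcomp b) m0)]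
  rfl
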